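/- Let G be a finite directed graph with an edge-cost function w : E → ℝ, and define the bottleneck cost of a path as the maximum edge cost along it. If t is reachable from s in G, then a Dijkstra-style algorithm that repeatedly extracts the unvisited vertex of minimum cost-to-come c(v), and relaxes each out-edge (v,x) via c_new = max(c(v), w(v,x)), computes at termination the minimum bottleneck cost of any path from s to t. -/

import Mathlib

open Classical

variable {V : Type*}

/-- Bottleneck cost of the directed path `s :: l` (maximum edge cost; `⊥` if `l = []`). -/
noncomputable def bcost (w : V → V → ℝ) (s : V) (l : List V) : WithBot ℝ :=
  (((s :: l).zip l).map fun p => w p.1 p.2).maximum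

/-- `l` is (the vertex list, excluding `s`, of) a directed path from `s` to `t`. -/
def IsPathTo (adj : V → V → Prop) (s t : V) (l : List V) : Prop :=
  l ≠ [] ∧ List.Chain adj s l ∧ l.getLast? = some t

/-- One relaxation: improve the cost-to-come of `x` via the out-edge `(z, x)` using
`c_new = max (c z) (w z x)`. -/
noncomputable def relax (adj : V → V → Prop) (w : V → V → ℝ)
    (c : V → WithTop ℝ) (z x : V) : WithTop ℝ :=
  if adj z x then min (c x) (max (c z) ((w z x : ℝ) : WithTop ℝ)) else c x

/-- Dijkstra-style loop: repeatedly extract an unvisited vertex of minimum cost-to-come and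
relax its out-edges towards the remaining unvisited vertices. -/
noncomputable def dijkstraRun [DecidableEq V] (adj : V → V → Prop) (w : V → V → ℝ) :
    Finset V → (V → WithTop ℝ) → (V → WithTop ℝ) := fun U c =>
  if h : ∃ z ∈ U, ∀ x ∈ U, c z ≤ c x then
    let z := h.choose
    dijkstraRun adj w (U.erase z)
      (fun x => if x ∈ U.erase z then relax adj w c z x else c x)
  else c
termination_by U => U.card
decreasing_by
  exact Finset.card_erase_lt_of_mem h.choose_spec.1

noncomputable def rbc (w : V → V → ℝ) : V → List V → ℝ
  | _, [] => 0
  | s, x :: l => max (w s x) (rbc w x l)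

lemma rbc_nonneg (w : V → V → ℝ) (hw : ∀ u v, 0 ≤ w u v) :
    ∀ (l : List V) (s : V), 0 ≤ rbc w s l
  | [], _ => le_refl 0
  | x :: l, s => le_trans (hw s x) (le_max_left _ _)

lemma bcost_cons (w : V → V → ℝ) (s x : V) (l : List V) :
    bcost w s (x :: l) = max (↑(w s x)) (bcost w x l) := by
  simp [bcost, List.maximum_cons]

lemma bcost_eq_rbc (w : V → V → ℝ) (hw : ∀ u v, 0 ≤ w u v) :
    ∀ (l : List V), l ≠ [] → ∀ s, bcost w s l = ((rbc w s l : ℝ) : WithBot ℝ)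
  | [], h, _ => absurd rfl h
  | [x], _, s => by
      simp [bcost, rbc, max_eq_left (hw s x)]
  | x :: y :: l, _, s => by
      rw [bcost_cons, bcost_eq_rbc w hw (y :: l) (by simp) x]
      show _ = ((max (w s x) (rbc w x (y :: l)) : ℝ) : WithBot ℝ)
      rw [WithBot.coe_max]

lemma rbc_mem (w : V → V → ℝ) :
    ∀ (l : List V) (s : V), rbc w s l = 0 ∨ ∃ a b, rbc w s l = w a b
  | [], _ => Or.inl rfl
  | x :: l, s => by
      rcases max_choice (w s x) (rbc w x l) with h | h
      · exact Or.inr ⟨s, x, h⟩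
      · have : rbc w s (x :: l) = rbc w x l := h
        rw [this]; exact rbc_mem w l x

lemma rbc_single (w : V → V → ℝ) (hw : ∀ u v, 0 ≤ w u v) (s z : V) :
    rbc w s [z] = w s z := by
  show max (w s z) (rbc w z []) = w s z
  show max (w s z) 0 = w s z
  exact max_eq_left (hw s z)

lemma isPathTo_single (adj : V → V → Prop) {s z : V} (h : adj s z) :
    IsPathTo adj s z [z] := ⟨by simp, by simp [List.Chain, h], by simp⟩

lemma chain_append (adj : V → V → Prop) (w : V → V → ℝ) (hw : ∀ u v, 0 ≤ w u v) :
    ∀ (l : List V) (s v z : V), List.Chain adj s l → (s :: l).getLast (by simp) = v → adj v z →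
      List.Chain adj s (l ++ [z]) ∧ rbc w s (l ++ [z]) = max (rbc w s l) (w v z)
  | [], s, v, z, _, hlast, hadj => by
      have hv : s = v := hlast
      subst hv
      refine ⟨List.Chain.cons hadj List.Chain.nil, ?_⟩
      show max (w s z) (rbc w z []) = max (rbc w s []) (w s z)
      show max (w s z) 0 = max 0 (w s z)
      rw [max_comm]
  | x :: l, s, v, z, hch, hlast, hadj => by
      simp only [List.Chain] at hch
      rw [List.chain_cons] at hch
      have hlast' : (x :: l).getLast (by simp) = v := by
        rw [← hlast, List.getLast_cons (by simp : x :: l ≠ [])]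
      obtain ⟨h1, h2⟩ := chain_append adj w hw l x v z hch.2 hlast' hadj
      refine ⟨List.chain_cons.mpr ⟨hch.1, h1⟩, ?_⟩
      show max (w s x) (rbc w x (l ++ [z])) = max (max (w s x) (rbc w x l)) (w v z)
      rw [h2, max_assoc]

lemma isPathTo_extend (adj : V → V → Prop) (w : V → V → ℝ) (hw : ∀ u v, 0 ≤ w u v)
    {s v z : V} {l : List V} (h : IsPathTo adj s v l) (hz : adj v z) :
    IsPathTo adj s z (l ++ [z]) ∧ rbc w s (l ++ [z]) = max (rbc w s l) (w v z) := by
  obtain ⟨hne, hch, hlast⟩ := h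
  have hlast' : (s :: l).getLast (by simp) = v := by
    rw [List.getLast_cons hne]
    rw [List.getLast?_eq_getLast hne] at hlast
    exact Option.some_injective _ hlast
  obtain ⟨h1, h2⟩ := chain_append adj w hw l s v z hch hlast' hz
  exact ⟨⟨by simp, h1, by simp⟩, h2⟩

lemma crossing (adj : V → V → Prop) (w : V → V → ℝ) (hw : ∀ u v, 0 ≤ w u v)
    [DecidableEq V] (U : Finset V) :
    ∀ (l : List V) (s : V), List.Chain adj s l → s ∉ U → ∀ z ∈ U, l.getLast? = some z →
      ∃ y x, y ∉ U ∧ x ∈ U ∧ adj y x ∧ w y x ≤ rbc w s l ∧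
        (y = s ∨ ∃ l', IsPathTo adj s y l' ∧ rbc w s l' ≤ rbc w s l)
  | [], s, _, _, z, hz, hlast => by simp at hlast
  | [x], s, hch, hs, z, hz, hlast => by
      simp at hlast; subst hlast
      simp only [List.Chain] at hch
      rw [List.chain_cons] at hch
      refine ⟨s, x, hs, hz, hch.1, ?_, Or.inl rfl⟩
      show w s x ≤ max (w s x) (rbc w x [])
      exact le_max_left _ _
  | x :: y :: l, s, hch, hs, z, hz, hlast => by
      simp only [List.Chain] at hch
      rw [List.chain_cons] at hch
      have hrbc : rbc w s (x :: y :: l) = max (w s x) (rbc w x (y :: l)) := rfl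
      by_cases hxU : x ∈ U
      · exact ⟨s, x, hs, hxU, hch.1, by rw [hrbc]; exact le_max_left _ _, Or.inl rfl⟩
      · have hlast2 : (y :: l).getLast? = some z := by
          rw [← hlast]; exact List.getLast?_cons_cons.symm
        obtain ⟨y', x', hy', hx', hadj', hwle', hpath'⟩ :=
          crossing adj w hw U (y :: l) x hch.2 hxU z hz hlast2
        refine ⟨y', x', hy', hx', hadj',
          le_trans hwle' (by rw [hrbc]; exact le_max_right _ _), ?_⟩
        rcases hpath' with hyx | ⟨l'', hl'', hle''⟩
        · refine Or.inr ⟨[x], ?_, ?_⟩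
          · rw [hyx]; exact isPathTo_single adj hch.1
          · rw [rbc_single w hw, hrbc]; exact le_max_left _ _
        · refine Or.inr ⟨x :: l'', ⟨by simp, List.chain_cons.mpr ⟨hch.1, hl''.2.1⟩, ?_⟩, ?_⟩
          · rw [← hl''.2.2]
            obtain ⟨a, l3, rfl⟩ := List.exists_cons_of_ne_nil hl''.1
            exact List.getLast?_cons_cons
          · show max (w s x) (rbc w x l'') ≤ rbc w s (x :: y :: l)
            rw [hrbc]
            exact max_le_max (le_refl _) hle''

def pcSet (adj : V → V → Prop) (w : V → V → ℝ) (s v : V) : Set ℝ :=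
  {x | ∃ l, IsPathTo adj s v l ∧ rbc w s l = x}

lemma pcSet_finite [Fintype V] (adj : V → V → Prop) (w : V → V → ℝ) (s v : V) :
    (pcSet adj w s v).Finite := by
  apply Set.Finite.subset
    ((Set.finite_range (fun p : V × V => w p.1 p.2)).insert (0 : ℝ))
  rintro x ⟨l, _, rfl⟩
  rcases rbc_mem w l s with h | ⟨a, b, h⟩
  · exact Set.mem_insert_iff.mpr (Or.inl h)
  · exact Set.mem_insert_iff.mpr (Or.inr ⟨(a, b), h.symm⟩)

lemma pcSet_exists_least [Fintype V] (adj : V → V → Prop) (w : V → V → ℝ) (s v : V)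
    (h : (pcSet adj w s v).Nonempty) : ∃ r, IsLeast (pcSet adj w s v) r := by
  have hf := pcSet_finite adj w s v
  have hne : hf.toFinset.Nonempty := by
    rwa [Set.Finite.toFinset_nonempty]
  refine ⟨hf.toFinset.min' hne, ?_, ?_⟩
  · have := hf.toFinset.min'_mem hne
    rwa [Set.Finite.mem_toFinset] at this
  · intro x hx
    exact hf.toFinset.min'_le x (Set.Finite.mem_toFinset hf |>.mpr hx)

noncomputable def Dd (adj : V → V → Prop) (w : V → V → ℝ) [Fintype V] (s : V) : V → WithTop ℝ :=
  fun v =>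
    if v = s then 0
    else if h : (pcSet adj w s v).Nonempty then
      (((pcSet_exists_least adj w s v h).choose : ℝ) : WithTop ℝ)
    else ⊤

section DdLemmas
variable [Fintype V] (adj : V → V → Prop) (w : V → V → ℝ)

lemma Dd_self (s : V) : Dd adj w s s = 0 := if_pos rfl

lemma Dd_le_path (hw : ∀ u v, 0 ≤ w u v) {s v : V} {l : List V} (h : IsPathTo adj s v l) :
    Dd adj w s v ≤ ((rbc w s l : ℝ) : WithTop ℝ) := by
  by_cases hvs : v = s
  · rw [hvs, Dd_self]
    rw [← WithTop.coe_zero, WithTop.coe_le_coe]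
    exact rbc_nonneg w hw l s
  · have hne : (pcSet adj w s v).Nonempty := ⟨rbc w s l, l, h, rfl⟩
    rw [Dd, if_neg hvs, dif_pos hne, WithTop.coe_le_coe]
    exact (pcSet_exists_least adj w s v hne).choose_spec.2 ⟨l, h, rfl⟩

lemma Dd_spec {s v : V} (hvs : v ≠ s) (htop : Dd adj w s v ≠ ⊤) :
    ∃ l, IsPathTo adj s v l ∧ ((rbc w s l : ℝ) : WithTop ℝ) = Dd adj w s v := by
  rw [Dd, if_neg hvs] at htop ⊢
  by_cases hne : (pcSet adj w s v).Nonempty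
  · rw [dif_pos hne] at htop ⊢
    obtain ⟨l, hl, hval⟩ := (pcSet_exists_least adj w s v hne).choose_spec.1
    exact ⟨l, hl, by rw [hval]⟩
  · rw [dif_neg hne] at htop
    exact absurd rfl htop

lemma Dd_nonneg (hw : ∀ u v, 0 ≤ w u v) (s v : V) : 0 ≤ Dd adj w s v := by
  rw [Dd]
  by_cases hvs : v = s
  · rw [if_pos hvs]
  · rw [if_neg hvs]
    by_cases hne : (pcSet adj w s v).Nonempty
    · rw [dif_pos hne]
      obtain ⟨l, _, hval⟩ := (pcSet_exists_least adj w s v hne).choose_spec.1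
      rw [← hval, ← WithTop.coe_zero, WithTop.coe_le_coe]
      exact rbc_nonneg w hw l s
    · rw [dif_neg hne]
      exact le_top

end DdLemmas

lemma dijkstra_main [Fintype V] [DecidableEq V] (adj : V → V → Prop) (w : V → V → ℝ)
    (hw : ∀ u v, 0 ≤ w u v) (s : V) :
    ∀ (n : ℕ) (U : Finset V) (c : V → WithTop ℝ), U.card = n → s ∉ U →
      (∀ v, v ∉ U → c v = Dd adj w s v) →
      (∀ v ∈ U, c v = Uᶜ.inf (fun z => if adj z v then
        max (Dd adj w s z) ((w z v : ℝ) : WithTop ℝ) else ⊤)) →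
      (∀ v, v ∉ U → ∀ u ∈ U, Dd adj w s v ≤ c u) →
      ∀ v, dijkstraRun adj w U c v = Dd adj w s v := by
  intro n
  induction n with
  | zero =>
    intro U c hcard hs hA hB hC v
    have hU : U = ∅ := Finset.card_eq_zero.mp hcard
    rw [dijkstraRun, dif_neg]
    · exact hA v (by simp [hU])
    · rintro ⟨z, hz, -⟩; simp [hU] at hz
  | succ n ih =>
    intro U c hcard hs hA hB hC v
    have hUne : U.Nonempty := by rw [← Finset.card_pos, hcard]; omega
    have h : ∃ z ∈ U, ∀ x ∈ U, c z ≤ c x := U.exists_min_image c hUne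
    obtain ⟨hzU, hzmin⟩ := h.choose_spec
    set z := h.choose with hzdef
    have hzs : z ≠ s := fun hh => hs (hh ▸ hzU)
    -- key claim: c z = Dd z
    have hDz_le : Dd adj w s z ≤ c z := by
      rw [hB z hzU]
      apply Finset.le_inf
      intro y hy
      by_cases hadj : adj y z
      · rw [if_pos hadj]
        by_cases hys : y = s
        · rw [hys]
          have hadj' : adj s z := hys ▸ hadj
          calc Dd adj w s z ≤ _ := Dd_le_path adj w hw (isPathTo_single adj hadj')
            _ = ((w s z : ℝ) : WithTop ℝ) := by rw [rbc_single w hw]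
            _ ≤ _ := le_max_right _ _
        · by_cases htop : Dd adj w s y = ⊤
          · rw [htop]
            simp
          · obtain ⟨ly, hly, hval⟩ := Dd_spec adj w hys htop
            obtain ⟨hpath2, hval2⟩ := isPathTo_extend adj w hw hly hadj
            calc Dd adj w s z ≤ _ := Dd_le_path adj w hw hpath2
              _ = max ((rbc w s ly : ℝ) : WithTop ℝ) ((w y z : ℝ) : WithTop ℝ) := by
                  rw [hval2, WithTop.coe_max]
              _ = max (Dd adj w s y) ((w y z : ℝ) : WithTop ℝ) := by rw [hval]
      · rw [if_neg hadj]; exact le_top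
    have hcz_le : c z ≤ Dd adj w s z := by
      by_cases htop : Dd adj w s z = ⊤
      · rw [htop]; exact le_top
      obtain ⟨l, hl, hval⟩ := Dd_spec adj w hzs htop
      obtain ⟨y, x, hyU, hxU, hadj, hwle, hyp⟩ :=
        crossing adj w hw U l s hl.2.1 hs z hzU hl.2.2
      have h3 : Dd adj w s y ≤ ((rbc w s l : ℝ) : WithTop ℝ) := by
        rcases hyp with rfl | ⟨l', hl', hle⟩
        · rw [Dd_self, ← WithTop.coe_zero, WithTop.coe_le_coe]
          exact rbc_nonneg w hw l y
        · exact le_trans (Dd_le_path adj w hw hl') (WithTop.coe_le_coe.mpr hle)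
      calc c z ≤ c x := hzmin x hxU
        _ ≤ _ := by
            rw [hB x hxU]
            exact Finset.inf_le (Finset.mem_compl.mpr hyU)
        _ = max (Dd adj w s y) ((w y x : ℝ) : WithTop ℝ) := if_pos hadj
        _ ≤ max ((rbc w s l : ℝ) : WithTop ℝ) ((rbc w s l : ℝ) : WithTop ℝ) :=
            max_le_max h3 (WithTop.coe_le_coe.mpr hwle)
        _ = ((rbc w s l : ℝ) : WithTop ℝ) := max_self _
        _ = Dd adj w s z := hval
    have hkey : c z = Dd adj w s z := le_antisymm hcz_le hDz_le
    rw [dijkstraRun, dif_pos h]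
    refine ih (U.erase z) _ (by rw [Finset.card_erase_of_mem hzU, hcard]; rfl)
      (fun hmem => hs (Finset.mem_of_mem_erase hmem)) ?_ ?_ ?_ v
    · -- A'
      intro u hu
      by_cases huU : u ∈ U
      · have huz : u = z := by
          by_contra hne
          exact hu (Finset.mem_erase.mpr ⟨hne, huU⟩)
        rw [if_neg hu, huz, hkey]
      · rw [if_neg hu]
        exact hA u huU
    · -- B'
      intro u hu
      rw [if_pos hu]
      have huU : u ∈ U := Finset.mem_of_mem_erase hu
      rw [Finset.compl_erase, Finset.inf_insert, relax]
      by_cases hadj : adj z u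
      · rw [if_pos hadj, if_pos hadj, ← hB u huU, hkey, min_comm]
      · rw [if_neg hadj, if_neg hadj, ← hB u huU, top_inf_eq]
    · -- C'
      intro u hu x hx
      have hxU : x ∈ U := Finset.mem_of_mem_erase hx
      rw [if_pos hx, relax]
      have h1 : Dd adj w s u ≤ c x := by
        by_cases huU : u ∈ U
        · have huz : u = z := by
            by_contra hne
            exact hu (Finset.mem_erase.mpr ⟨hne, huU⟩)
          rw [huz, ← hkey]
          exact hzmin x hxU
        · exact hC u huU x hxU
      have h2 : Dd adj w s u ≤ c z := by
        by_cases huU : u ∈ U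
        · have huz : u = z := by
            by_contra hne
            exact hu (Finset.mem_erase.mpr ⟨hne, huU⟩)
          rw [huz]
          exact hDz_le
        · exact hC u huU z hzU
      by_cases hadj : adj z x
      · rw [if_pos hadj]
        exact le_min h1 (le_trans h2 (le_max_left _ _))
      · rw [if_neg hadj]
        exact h1

/-- Correctness of bottleneck Dijkstra: on a finite directed graph with nonnegative edge costs,
starting from cost-to-come `0` at `s` and `∞` elsewhere, the algorithm computes at `t` the
minimum bottleneck cost over all directed paths from `s` to `t`, provided `t ≠ s` is
reachable from `s`. -/
theorem dijkstra_bottleneck_correct [Fintype V] [DecidableEq V]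
    (adj : V → V → Prop) (w : V → V → ℝ) (hw : ∀ u v, 0 ≤ w u v)
    (s t : V) (hst : s ≠ t) (hreach : ∃ l, IsPathTo adj s t l) :
    ∃ m : ℝ,
      IsLeast {x : ℝ | ∃ l, IsPathTo adj s t l ∧ bcost w s l = (x : WithBot ℝ)} m ∧
      dijkstraRun adj w Finset.univ (fun v => if v = s then (0 : WithTop ℝ) else ⊤) t
        = ((m : ℝ) : WithTop ℝ) := by
  have hts : t ≠ s := hst.symm
  obtain ⟨l0, hl0⟩ := hreach
  have hpc : (pcSet adj w s t).Nonempty := ⟨rbc w s l0, l0, hl0, rfl⟩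
  obtain ⟨hm1, hm2⟩ := (pcSet_exists_least adj w s t hpc).choose_spec
  set m := (pcSet_exists_least adj w s t hpc).choose with hmdef
  have hseteq : {x : ℝ | ∃ l, IsPathTo adj s t l ∧ bcost w s l = (x : WithBot ℝ)}
      = pcSet adj w s t := by
    ext x
    constructor
    · rintro ⟨l, hl, hb⟩
      rw [bcost_eq_rbc w hw l hl.1 s] at hb
      exact ⟨l, hl, WithBot.coe_injective hb⟩
    · rintro ⟨l, hl, rfl⟩
      exact ⟨l, hl, bcost_eq_rbc w hw l hl.1 s⟩
  have hDt : Dd adj w s t = ((m : ℝ) : WithTop ℝ) := by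
    rw [Dd, if_neg hts, dif_pos hpc]
  refine ⟨m, by rw [hseteq]; exact ⟨hm1, hm2⟩, ?_⟩
  set c0 : V → WithTop ℝ := fun v => if v = s then (0 : WithTop ℝ) else ⊤ with hc0
  have hc0s : c0 s = 0 := if_pos rfl
  have h0 : ∃ z ∈ Finset.univ, ∀ x ∈ (Finset.univ : Finset V), c0 z ≤ c0 x := by
    refine ⟨s, Finset.mem_univ s, fun x _ => ?_⟩
    by_cases hx : x = s
    · simp [hc0, hx]
    · simp [hc0, hx]
  have hch : h0.choose = s := by
    obtain ⟨-, hmin⟩ := h0.choose_spec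
    by_contra hne
    have h1 : c0 h0.choose ≤ c0 s := hmin s (Finset.mem_univ s)
    rw [hc0s] at h1
    have h2 : c0 h0.choose = ⊤ := if_neg hne
    rw [h2] at h1
    exact absurd (top_le_iff.mp h1).symm (by simp)
  rw [dijkstraRun, dif_pos h0, hch, ← hDt]
  set U1 := Finset.univ.erase s with hU1
  have hsU1 : s ∉ U1 := Finset.notMem_erase s _
  have hcompl : U1ᶜ = {s} := by
    rw [hU1, Finset.compl_erase, Finset.compl_univ, Finset.insert_empty]
  apply dijkstra_main adj w hw s U1.card U1 _ rfl hsU1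
  · -- A
    intro u hu
    have hus : u = s := by
      by_contra hne
      exact hu (Finset.mem_erase.mpr ⟨hne, Finset.mem_univ u⟩)
    rw [if_neg hu, hus, hc0s, Dd_self]
  · -- B
    intro u hu
    have hus : u ≠ s := (Finset.mem_erase.mp hu).1
    rw [if_pos hu, relax, hcompl, Finset.inf_singleton, Dd_self, hc0s]
    have hc0u : c0 u = ⊤ := if_neg hus
    by_cases hadj : adj s u
    · rw [if_pos hadj, if_pos hadj, hc0u]
      simp
    · rw [if_neg hadj, if_neg hadj, hc0u]
  · -- C
    intro u hu x hx
    have hus : u = s := by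
      by_contra hne
      exact hu (Finset.mem_erase.mpr ⟨hne, Finset.mem_univ u⟩)
    rw [hus, Dd_self, if_pos hx, relax]
    have hc0nn : ∀ y, (0 : WithTop ℝ) ≤ c0 y := by
      intro y
      by_cases hy : y = s <;> simp [hc0, hy]
    by_cases hadj : adj s x
    · rw [if_pos hadj]
      refine le_min (hc0nn x) (le_trans (hc0nn s) (le_max_left _ _))
    · rw [if_neg hadj]
      exact hc0nn x
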